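/- Let A and R be n×n real matrices with Aᵀ*A = 1, Rᵀ*R = 1 and rank(1 − R) = 1. Then rank(1 − A*R) = rank(1 − A) + 1 or rank(1 − A*R) = rank(1 − A) − 1. -/

import Mathlib

open Matrix

namespace RankReflAux

variable {n : ℕ}

/-- Subadditivity of matrix rank. -/
lemma rank_add_le' (A B : Matrix (Fin n) (Fin n) ℝ) : (A + B).rank ≤ A.rank + B.rank := by
  classical
  have h : LinearMap.range (A + B).mulVecLin ≤
      LinearMap.range A.mulVecLin ⊔ LinearMap.range B.mulVecLin := by
    rintro x ⟨v, rfl⟩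
    rw [mulVecLin_add]
    exact Submodule.add_mem_sup (LinearMap.mem_range_self _ v) (LinearMap.mem_range_self _ v)
  calc (A + B).rank
      ≤ Module.finrank ℝ ↥(LinearMap.range A.mulVecLin ⊔ LinearMap.range B.mulVecLin) :=
        Submodule.finrank_mono h
    _ ≤ A.rank + B.rank := Submodule.finrank_add_le_finrank_add_finrank _ _

lemma rank_neg' (A : Matrix (Fin n) (Fin n) ℝ) : (-A).rank = A.rank := by
  have h : LinearMap.range (-A).mulVecLin = LinearMap.range A.mulVecLin := by
    ext x
    simp only [LinearMap.mem_range, mulVecLin_apply]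
    constructor
    · rintro ⟨v, rfl⟩
      exact ⟨-v, by simp [mulVec_neg, neg_mulVec]⟩
    · rintro ⟨v, rfl⟩
      exact ⟨-v, by simp [mulVec_neg, neg_mulVec]⟩
  rw [Matrix.rank, Matrix.rank, h]

lemma eq_zero_of_forall_mulVec (M : Matrix (Fin n) (Fin n) ℝ)
    (h : ∀ v, M *ᵥ v = 0) : M = 0 := by
  ext i j
  simpa using congrFun (h (Pi.single j 1)) i

/-- Existence of the orthogonal projection onto `ker N`, with the properties we need. -/
lemma exists_proj (N : Matrix (Fin n) (Fin n) ℝ) :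
    ∃ P : Matrix (Fin n) (Fin n) ℝ, Pᵀ = P ∧ P * P = P ∧ N * P = 0 ∧
      (∀ x, N *ᵥ x = 0 → P *ᵥ x = x) ∧
      (1 - (2 : ℝ) • P).det = (-1 : ℝ) ^ (n - N.rank) := by
  classical
  have hB : (Nᴴ * N).IsHermitian := isHermitian_conjTranspose_mul_self N
  set B : Matrix (Fin n) (Fin n) ℝ := Nᴴ * N with hBdef
  set U : Matrix (Fin n) (Fin n) ℝ := (hB.eigenvectorUnitary : Matrix (Fin n) (Fin n) ℝ)
    with hUdef
  set μ : Fin n → ℝ := hB.eigenvalues with hμdef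
  have hU1 : U * star U = 1 := (Matrix.mem_unitaryGroup_iff).mp hB.eigenvectorUnitary.2
  have hU2 : star U * U = 1 := (Matrix.mem_unitaryGroup_iff').mp hB.eigenvectorUnitary.2
  set E : Matrix (Fin n) (Fin n) ℝ := diagonal (fun i => if μ i = 0 then (1 : ℝ) else 0)
    with hEdef
  set P : Matrix (Fin n) (Fin n) ℝ := U * E * star U with hPdef
  have hspec : B = U * diagonal μ * star U := by
    have := hB.spectral_theorem
    simpa using this
  have hEstar : star E = E := by
    simp [hEdef, star_eq_conjTranspose, diagonal_conjTranspose]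
  have hPstar : star P = P := by
    simp only [hPdef, StarMul.star_mul, star_star, hEstar]
    rw [mul_assoc]
  have hPT : Pᵀ = P := by
    have := hPstar
    rwa [star_eq_conjTranspose, conjTranspose_eq_transpose_of_trivial] at this
  have hEE : E * E = E := by
    have hf : (fun i => (if μ i = 0 then (1 : ℝ) else 0) * if μ i = 0 then (1 : ℝ) else 0)
        = fun i => if μ i = 0 then (1 : ℝ) else 0 := by
      funext i
      split_ifs <;> ring
    rw [hEdef, diagonal_mul_diagonal, hf]
  have hPP : P * P = P := by
    calc P * P = U * E * (star U * U) * E * star U := by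
          simp only [hPdef, Matrix.mul_assoc]
      _ = U * (E * E) * star U := by rw [hU2]; simp only [Matrix.mul_assoc, Matrix.mul_one]
      _ = P := by rw [hEE]
  have hDE : diagonal μ * E = 0 := by
    have hf : (fun i => μ i * if μ i = 0 then (1 : ℝ) else 0) = fun _ => (0 : ℝ) := by
      funext i
      split_ifs with h <;> simp [h]
    rw [hEdef, diagonal_mul_diagonal, hf, diagonal_zero]
  have hBP : B * P = 0 := by
    calc B * P = U * diagonal μ * (star U * U) * E * star U := by
          simp only [hspec, hPdef, Matrix.mul_assoc]
      _ = U * (diagonal μ * E) * star U := by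
          rw [hU2]; simp only [Matrix.mul_assoc, Matrix.mul_one]
      _ = 0 := by rw [hDE, Matrix.mul_zero, Matrix.zero_mul]
  have hNP : N * P = 0 := by
    apply eq_zero_of_forall_mulVec
    intro v
    have h1 : B *ᵥ (P *ᵥ v) = 0 := by
      rw [mulVec_mulVec, hBP, zero_mulVec]
    have h2 : N *ᵥ (P *ᵥ v) = 0 := by
      rw [hBdef] at h1
      exact (conjTranspose_mul_self_mulVec_eq_zero N _).mp h1
    rw [← mulVec_mulVec, h2]
  have hker : ∀ x, N *ᵥ x = 0 → P *ᵥ x = x := by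
    intro x hx
    have hBx : B *ᵥ x = 0 := by
      rw [hBdef, ← mulVec_mulVec, hx, mulVec_zero]
    have hy : diagonal μ *ᵥ (star U *ᵥ x) = 0 := by
      have : star U *ᵥ (B *ᵥ x) = 0 := by rw [hBx, mulVec_zero]
      rw [hspec] at this
      simp only [← mulVec_mulVec] at this
      rw [mulVec_mulVec, mulVec_mulVec, hU2] at this
      simpa [← mulVec_mulVec] using this
    have hEy : E *ᵥ (star U *ᵥ x) = star U *ᵥ x := by
      funext i
      have hμy : μ i * (star U *ᵥ x) i = 0 := by
        have := congrFun hy i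
        simpa [mulVec_diagonal] using this
      rw [hEdef]
      by_cases h : μ i = 0
      · simp [mulVec_diagonal, h]
      · have : (star U *ᵥ x) i = 0 := by
          rcases mul_eq_zero.mp hμy with h' | h'
          · exact absurd h' h
          · exact h'
        simp [mulVec_diagonal, this]
    calc P *ᵥ x = U *ᵥ (E *ᵥ (star U *ᵥ x)) := by simp [hPdef, ← mulVec_mulVec]
      _ = U *ᵥ (star U *ᵥ x) := by rw [hEy]
      _ = x := by rw [mulVec_mulVec, hU1, one_mulVec]
  have hdet : (1 - (2 : ℝ) • P).det = (-1 : ℝ) ^ (n - N.rank) := by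
    have hconj : (1 : Matrix (Fin n) (Fin n) ℝ) - (2 : ℝ) • P
        = U * (1 - (2 : ℝ) • E) * star U := by
      rw [Matrix.mul_sub, Matrix.sub_mul, Matrix.mul_one, hU1, Matrix.mul_smul,
        Matrix.smul_mul, hPdef]
    have hdetU : U.det * (star U).det = 1 := by
      rw [← det_mul, hU1, det_one]
    have hd1 : (1 - (2 : ℝ) • P).det = (1 - (2 : ℝ) • E).det := by
      rw [hconj, det_mul, det_mul]
      ring_nf
      rw [mul_comm, ← mul_assoc]
      rw [mul_comm (star U).det U.det, hdetU, one_mul]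
    have hd2 : ((1 : Matrix (Fin n) (Fin n) ℝ) - (2 : ℝ) • E)
        = diagonal (fun i => if μ i = 0 then (-1 : ℝ) else 1) := by
      ext i j
      rcases eq_or_ne i j with rfl | hij
      · simp only [hEdef, Matrix.sub_apply, Matrix.smul_apply, Matrix.one_apply_eq,
          diagonal_apply_eq, smul_eq_mul]
        split_ifs <;> norm_num
      · simp [hEdef, Matrix.one_apply_ne hij, diagonal_apply_ne _ hij]
    have hcard : n - N.rank = (Finset.univ.filter (fun i => μ i = 0)).card := by
      have hrank : N.rank = (Finset.univ.filter (fun i => ¬ μ i = 0)).card := by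
        rw [← Matrix.rank_conjTranspose_mul_self N, ← hBdef, hB.rank_eq_card_non_zero_eigs]
        exact Fintype.card_subtype _
      have h2 : (Finset.univ.filter (fun i => μ i = 0)).card
          + (Finset.univ.filter (fun i => ¬ μ i = 0)).card = n := by
        rw [Finset.card_filter_add_card_filter_not]
        simp
      omega
    rw [hd1, hd2, det_diagonal, hcard]
    rw [Finset.prod_ite, Finset.prod_const, Finset.prod_const, one_pow, mul_one]
  exact ⟨P, hPT, hPP, hNP, hker, hdet⟩

/-- An orthogonal matrix without the eigenvalue 1 has determinant `(-1)^n`. -/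
lemma det_eq_of_one_sub_ne (M : Matrix (Fin n) (Fin n) ℝ) (hM : Mᵀ * M = 1)
    (h : ((1 : Matrix (Fin n) (Fin n) ℝ) - M).det ≠ 0) : M.det = (-1 : ℝ) ^ n := by
  have hMMt : M * Mᵀ = 1 := mul_eq_one_comm.mp hM
  have key : M.det * ((1 : Matrix (Fin n) (Fin n) ℝ) - M).det
      = (-1 : ℝ) ^ n * ((1 : Matrix (Fin n) (Fin n) ℝ) - M).det := by
    calc M.det * ((1 : Matrix (Fin n) (Fin n) ℝ) - M).det
        = M.det * ((1 : Matrix (Fin n) (Fin n) ℝ) - M)ᵀ.det := by rw [det_transpose]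
      _ = (M * ((1 : Matrix (Fin n) (Fin n) ℝ) - M)ᵀ).det := by rw [det_mul]
      _ = (M - 1).det := by
          rw [transpose_sub, transpose_one, Matrix.mul_sub, Matrix.mul_one, hMMt]
      _ = (-((1 : Matrix (Fin n) (Fin n) ℝ) - M)).det := by rw [neg_sub]
      _ = (-1 : ℝ) ^ n * ((1 : Matrix (Fin n) (Fin n) ℝ) - M).det := by
          rw [det_neg]
          simp
  exact mul_right_cancel₀ h key

/-- Parity lemma: for an orthogonal real matrix `M`, `det M = (-1)^(rank (1 - M))`. -/
lemma det_eq_neg_one_pow_rank (M : Matrix (Fin n) (Fin n) ℝ) (hM : Mᵀ * M = 1) :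
    M.det = (-1 : ℝ) ^ ((1 : Matrix (Fin n) (Fin n) ℝ) - M).rank := by
  classical
  obtain ⟨P, hPT, hPP, hNP, hker, hdet⟩ := exists_proj (1 - M)
  have hMP : M * P = P := by
    have : (1 - M) * P = 0 := hNP
    rw [Matrix.sub_mul, Matrix.one_mul, sub_eq_zero] at this
    exact this.symm
  have hMtP : Mᵀ * P = P := by
    calc Mᵀ * P = Mᵀ * (M * P) := by rw [hMP]
      _ = (Mᵀ * M) * P := by rw [Matrix.mul_assoc]
      _ = P := by rw [hM, Matrix.one_mul]
  have hPM : P * M = P := by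
    have h1 : (P * M)ᵀ = Pᵀ := by
      rw [transpose_mul, hPT, hMtP]
    calc P * M = ((P * M)ᵀ)ᵀ := by rw [transpose_transpose]
      _ = (Pᵀ)ᵀ := by rw [h1]
      _ = P := by rw [transpose_transpose]
  set S : Matrix (Fin n) (Fin n) ℝ := M * (1 - (2 : ℝ) • P) with hSdef
  have hSexp : S = M - (2 : ℝ) • P := by
    rw [hSdef, Matrix.mul_sub, Matrix.mul_one, Matrix.mul_smul, hMP]
  have hQ : ((1 : Matrix (Fin n) (Fin n) ℝ) - (2 : ℝ) • P)ᵀ = 1 - (2 : ℝ) • P := by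
    rw [transpose_sub, transpose_one, transpose_smul, hPT]
  have hQQ : ((1 : Matrix (Fin n) (Fin n) ℝ) - (2 : ℝ) • P) * (1 - (2 : ℝ) • P) = 1 := by
    rw [Matrix.mul_sub, Matrix.mul_one, Matrix.sub_mul, Matrix.one_mul, Matrix.smul_mul,
      Matrix.mul_smul, hPP, smul_smul]
    ext i j
    simp only [Matrix.sub_apply, Matrix.smul_apply, smul_eq_mul]
    ring
  have hS : Sᵀ * S = 1 := by
    rw [hSdef, transpose_mul, hQ]
    rw [Matrix.mul_assoc, ← Matrix.mul_assoc Mᵀ M, hM, Matrix.one_mul]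
    exact hQQ
  have hdet1S : ((1 : Matrix (Fin n) (Fin n) ℝ) - S).det ≠ 0 := by
    intro hcontra
    obtain ⟨v, hv0, hv⟩ := (Matrix.exists_mulVec_eq_zero_iff).mpr hcontra
    rw [sub_mulVec, one_mulVec, hSexp, sub_mulVec] at hv
    have hv' : v - M *ᵥ v + (2 : ℝ) • (P *ᵥ v) = 0 := by
      rw [smul_mulVec] at hv
      calc v - M *ᵥ v + (2 : ℝ) • (P *ᵥ v)
          = v - (M *ᵥ v - (2 : ℝ) • (P *ᵥ v)) := by abel
        _ = 0 := hv
    have hPv : P *ᵥ v = 0 := by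
      have happ : P *ᵥ (v - M *ᵥ v + (2 : ℝ) • (P *ᵥ v)) = 0 := by
        rw [hv', mulVec_zero]
      rw [mulVec_add, mulVec_sub, mulVec_smul, mulVec_mulVec, mulVec_mulVec, hPM, hPP] at happ
      have : (2 : ℝ) • (P *ᵥ v) = 0 := by
        calc (2 : ℝ) • (P *ᵥ v) = P *ᵥ v - P *ᵥ v + (2 : ℝ) • (P *ᵥ v) := by abel
          _ = 0 := happ
      have h2 : (2 : ℝ) ≠ 0 := two_ne_zero
      exact (smul_eq_zero.mp this).resolve_left h2
    have h1Mv : (1 - M) *ᵥ v = 0 := by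
      have := hv'
      rw [hPv, smul_zero, add_zero, sub_eq_zero] at this
      rw [sub_mulVec, one_mulVec, ← this, sub_self]
    have : v = 0 := by rw [← hker v h1Mv, hPv]
    exact hv0 this
  have hSorth := det_eq_of_one_sub_ne S hS hdet1S
  have hdetS : S.det = M.det * ((1 : Matrix (Fin n) (Fin n) ℝ) - (2 : ℝ) • P).det := by
    rw [hSdef, det_mul]
  have hrle : ((1 : Matrix (Fin n) (Fin n) ℝ) - M).rank ≤ n := by
    have := Matrix.rank_le_card_width ((1 : Matrix (Fin n) (Fin n) ℝ) - M)
    simpa using this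
  set r := ((1 : Matrix (Fin n) (Fin n) ℝ) - M).rank with hrdef
  have hkey : M.det * (-1 : ℝ) ^ (n - r) = (-1 : ℝ) ^ n := by
    rw [← hdet, ← hdetS, hSorth]
  have hsq : ((-1 : ℝ) ^ (n - r)) * ((-1 : ℝ) ^ (n - r)) = 1 := by
    rw [← pow_add]
    exact Even.neg_one_pow ⟨n - r, rfl⟩
  have : M.det = (-1 : ℝ) ^ n * (-1 : ℝ) ^ (n - r) := by
    calc M.det = M.det * ((-1 : ℝ) ^ (n - r) * (-1 : ℝ) ^ (n - r)) := by rw [hsq, mul_one]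
      _ = (M.det * (-1 : ℝ) ^ (n - r)) * (-1 : ℝ) ^ (n - r) := by ring
      _ = (-1 : ℝ) ^ n * (-1 : ℝ) ^ (n - r) := by rw [hkey]
  rw [this, ← pow_add]
  have harith : n + (n - r) = r + 2 * (n - r) := by omega
  rw [harith, pow_add, pow_mul]
  simp

end RankReflAux

open RankReflAux

/-- If `A` and `R` are orthogonal real matrices and `R` is a reflection
(`rank(1 − R) = 1`), then `rank(1 − A·R) = rank(1 − A) ± 1`. -/
theorem rank_one_sub_mul_reflection (n : ℕ) (A R : Matrix (Fin n) (Fin n) ℝ)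
    (hA : Aᵀ * A = 1) (hR : Rᵀ * R = 1) (hrk : (1 - R).rank = 1) :
    (1 - A * R).rank = (1 - A).rank + 1 ∨ (1 - A * R).rank = (1 - A).rank - 1 := by
  have hAR : (A * R)ᵀ * (A * R) = 1 := by
    rw [transpose_mul, Matrix.mul_assoc, ← Matrix.mul_assoc Aᵀ A R, hA, Matrix.one_mul, hR]
  -- rank inequalities
  have hle1 : (1 - A * R).rank ≤ (1 - A).rank + 1 := by
    have hdecomp : (1 : Matrix (Fin n) (Fin n) ℝ) - A * R = (1 - A) + A * (1 - R) := by
      rw [Matrix.mul_sub, Matrix.mul_one]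
      abel
    calc (1 - A * R).rank = ((1 - A) + A * (1 - R)).rank := by rw [hdecomp]
      _ ≤ (1 - A).rank + (A * (1 - R)).rank := rank_add_le' _ _
      _ ≤ (1 - A).rank + (1 - R).rank := by
          exact Nat.add_le_add_left (Matrix.rank_mul_le_right A (1 - R)) _
      _ = (1 - A).rank + 1 := by rw [hrk]
  have hle2 : (1 - A).rank ≤ (1 - A * R).rank + 1 := by
    have hdecomp : (1 : Matrix (Fin n) (Fin n) ℝ) - A = (1 - A * R) + (-(A * (1 - R))) := by
      rw [Matrix.mul_sub, Matrix.mul_one]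
      abel
    calc (1 - A).rank = ((1 - A * R) + (-(A * (1 - R)))).rank := by rw [hdecomp]
      _ ≤ (1 - A * R).rank + (-(A * (1 - R))).rank := rank_add_le' _ _
      _ = (1 - A * R).rank + (A * (1 - R)).rank := by rw [rank_neg']
      _ ≤ (1 - A * R).rank + (1 - R).rank := by
          exact Nat.add_le_add_left (Matrix.rank_mul_le_right A (1 - R)) _
      _ = (1 - A * R).rank + 1 := by rw [hrk]
  -- parity
  have hdA := det_eq_neg_one_pow_rank A hA
  have hdR := det_eq_neg_one_pow_rank R hR
  have hdAR := det_eq_neg_one_pow_rank (A * R) hAR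
  rw [hrk, pow_one] at hdR
  have hne : (1 - A * R).rank ≠ (1 - A).rank := by
    intro heq
    have : ((-1 : ℝ)) ^ (1 - A * R).rank = (-1 : ℝ) ^ (1 - A).rank * (-1) := by
      rw [← hdAR, ← hdA, ← hdR, det_mul]
    rw [heq, mul_neg_one] at this
    have hx : ((-1 : ℝ)) ^ (1 - A).rank = 0 := by linarith
    exact pow_ne_zero _ (show (-1 : ℝ) ≠ 0 by norm_num) hx
  omega
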